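/- Let A₁, A₂ be finite nonempty sets, let Ĝ, G* : A₁ × A₂ → ℝ, let η > 0, and let π₁ʳᵉᶠ ∈ Δ(A₁), π₂ʳᵉᶠ ∈ Δ(A₂) be strictly positive. Let (μ̂, ν̂) be a saddle point of J_Ĝ and (μ*, ν*) a saddle point of J_{G*}. Then (‖μ̂ − μ*‖₁ + ‖ν̂ − ν*‖₁)² ≤ 4η²·ξ², where ξ² = max( max_{a₁} Σ_{a₂} ν*(a₂)·(Ĝ(a₁,a₂) − G*(a₁,a₂))² , max_{a₂} Σ_{a₁} μ*(a₁)·(Ĝ(a₁,a₂) − G*(a₁,a₂))² ). -/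

import Mathlib

open Finset

/-- The probability simplex on a finite type: nonnegative entries summing to one. -/
def IsSimplex {A : Type*} [Fintype A] (p : A → ℝ) : Prop :=
  (∀ a, 0 ≤ p a) ∧ ∑ a, p a = 1

/-- KL divergence between two distributions on a finite type
(with the convention `0 * log 0 = 0`, which holds in Lean since `Real.log 0 = 0`). -/
noncomputable def KLdiv {A : Type*} [Fintype A] (p q : A → ℝ) : ℝ :=
  ∑ a, p a * Real.log (p a / q a)

/-- The KL-regularized zero-sum game objective
`J_G(μ, ν) = Σ_{a₁,a₂} μ(a₁) ν(a₂) G(a₁,a₂) − η⁻¹ KL(μ‖π₁ʳᵉᶠ) + η⁻¹ KL(ν‖π₂ʳᵉᶠ)`. -/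
noncomputable def J {A₁ A₂ : Type*} [Fintype A₁] [Fintype A₂]
    (G : A₁ × A₂ → ℝ) (η : ℝ) (π₁ref : A₁ → ℝ) (π₂ref : A₂ → ℝ)
    (μ : A₁ → ℝ) (ν : A₂ → ℝ) : ℝ :=
  (∑ a₁, ∑ a₂, μ a₁ * ν a₂ * G (a₁, a₂))
    - η⁻¹ * KLdiv μ π₁ref + η⁻¹ * KLdiv ν π₂ref

/-- `(μs, νs)` is a saddle point of `J_G` over the product of simplices:
`J_G(μ, νs) ≤ J_G(μs, νs) ≤ J_G(μs, ν)` for all `μ ∈ Δ(A₁)`, `ν ∈ Δ(A₂)`. -/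
def IsSaddle {A₁ A₂ : Type*} [Fintype A₁] [Fintype A₂]
    (G : A₁ × A₂ → ℝ) (η : ℝ) (π₁ref : A₁ → ℝ) (π₂ref : A₂ → ℝ)
    (μs : A₁ → ℝ) (νs : A₂ → ℝ) : Prop :=
  IsSimplex μs ∧ IsSimplex νs ∧
  (∀ μ : A₁ → ℝ, IsSimplex μ → J G η π₁ref π₂ref μ νs ≤ J G η π₁ref π₂ref μs νs) ∧
  (∀ ν : A₂ → ℝ, IsSimplex ν → J G η π₁ref π₂ref μs νs ≤ J G η π₁ref π₂ref μs ν)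

set_option linter.unusedSectionVars false
lemma log_lower {x : ℝ} (hx : 1 ≤ x) : 2*(x-1)/(x+1) ≤ Real.log x := by
  set f : ℝ → ℝ := fun y => Real.log y + 4/(y+1) with hf
  have hderiv : ∀ y ∈ Set.Ioi (1:ℝ), HasDerivAt f (1/y - 4/(y+1)^2) y := by
    intro y hy
    simp only [Set.mem_Ioi] at hy
    have hy0 : (0:ℝ) < y := by linarith
    have h1 : HasDerivAt Real.log (1/y) y := by
      simpa [one_div] using Real.hasDerivAt_log (ne_of_gt hy0)
    have h2 : HasDerivAt (fun y : ℝ => y + 1) 1 y := by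
      simpa using (hasDerivAt_id y).add_const 1
    have hne : y + 1 ≠ 0 := by positivity
    have h3 : HasDerivAt (fun y : ℝ => 4*(y+1)⁻¹) (4 * (-1/(y+1)^2)) y := by
      have := (h2.inv hne)
      simpa using this.const_mul (4:ℝ)
    have h3' : HasDerivAt (fun y : ℝ => 4/(y+1)) (4 * (-1/(y+1)^2)) y := by
      simpa [div_eq_mul_inv] using h3
    have := h1.add h3'
    have e : (1/y - 4/(y+1)^2) = 1/y + 4 * (-1/(y+1)^2) := by ring
    rw [e]
    exact this
  have hmono : MonotoneOn f (Set.Ici (1:ℝ)) := by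
    apply monotoneOn_of_deriv_nonneg (convex_Ici 1)
    · apply ContinuousOn.add
      · exact (Real.continuousOn_log).mono (by intro y hy; simp at hy ⊢; positivity)
      · apply ContinuousOn.div continuousOn_const (by fun_prop)
        intro y hy; simp at hy; positivity
    · intro y hy
      rw [interior_Ici] at hy
      exact ((hderiv y hy).differentiableAt).differentiableWithinAt
    · intro y hy
      rw [interior_Ici] at hy
      rw [(hderiv y hy).deriv]
      simp only [Set.mem_Ioi] at hy
      have hy0 : (0:ℝ) < y := by linarith
      rw [sub_nonneg, div_le_div_iff₀ (by positivity) hy0]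
      nlinarith [sq_nonneg (y-1)]
  have h1 : f 1 ≤ f x := hmono (by simp) hx hx
  simp only [hf, Real.log_one] at h1
  have hx1 : (0:ℝ) < x + 1 := by linarith
  rw [div_le_iff₀ hx1]
  have : 4/(x+1) = (2 - 2*(x-1)/(x+1) ) := by field_simp; ring
  rw [this] at h1
  have h2 : 2*(x-1)/(x+1) ≤ Real.log x := by linarith
  calc 2*(x-1) = (2*(x-1)/(x+1)) * (x+1) := by field_simp
  _ ≤ Real.log x * (x+1) := by
      apply mul_le_mul_of_nonneg_right h2 (le_of_lt hx1)


lemma sym_term_aux {p q : ℝ} (hp : 0 < p) (hq : 0 < q) (hpq : q ≤ p) :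
    2*(p-q)^2/(p+q) ≤ (p - q) * (Real.log p - Real.log q) := by
  have hx : 1 ≤ p/q := (one_le_div hq).2 hpq
  have h := log_lower hx
  have hlog : Real.log (p/q) = Real.log p - Real.log q := Real.log_div (ne_of_gt hp) (ne_of_gt hq)
  rw [hlog] at h
  have he : 2*(p/q-1)/(p/q+1) = 2*(p-q)/(p+q) := by
    rw [div_eq_div_iff (by positivity) (by linarith)]
    field_simp
  rw [he] at h
  have hpq0 : (0:ℝ) < p + q := by linarith
  have h2 : 0 ≤ p - q := by linarith
  calc 2*(p-q)^2/(p+q) = (p-q) * (2*(p-q)/(p+q)) := by field_simp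
  _ ≤ (p-q) * (Real.log p - Real.log q) := mul_le_mul_of_nonneg_left h h2

lemma sym_term {p q : ℝ} (hp : 0 < p) (hq : 0 < q) :
    2*(p-q)^2/(p+q) ≤ (p - q) * (Real.log p - Real.log q) := by
  rcases le_total q p with h | h
  · exact sym_term_aux hp hq h
  · have := sym_term_aux hq hp h
    have e1 : (q-p)^2 = (p-q)^2 := by ring
    have e2 : (q-p)*(Real.log q - Real.log p) = (p-q)*(Real.log p - Real.log q) := by ring
    rw [e1, e2, add_comm q p] at this
    exact this

lemma symKL_ge {A : Type*} [Fintype A] {p q : A → ℝ} (hp : IsSimplex p) (hq : IsSimplex q)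
    (hppos : ∀ a, 0 < p a) (hqpos : ∀ a, 0 < q a) :
    (∑ a, |p a - q a|)^2 ≤ KLdiv p q + KLdiv q p := by
  have hsym : KLdiv p q + KLdiv q p = ∑ a, (p a - q a) * (Real.log (p a) - Real.log (q a)) := by
    unfold KLdiv
    rw [← Finset.sum_add_distrib]
    apply Finset.sum_congr rfl
    intro a _
    rw [Real.log_div (ne_of_gt (hppos a)) (ne_of_gt (hqpos a)),
        Real.log_div (ne_of_gt (hqpos a)) (ne_of_gt (hppos a))]
    ring
  rw [hsym]
  have hmid : ∑ a, 2*(p a - q a)^2/(p a + q a)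
      ≤ ∑ a, (p a - q a) * (Real.log (p a) - Real.log (q a)) :=
    Finset.sum_le_sum fun a _ => sym_term (hppos a) (hqpos a)
  refine le_trans ?_ hmid
  -- Cauchy-Schwarz
  have hcs := Finset.sum_mul_sq_le_sq_mul_sq Finset.univ
      (fun a => |p a - q a| / Real.sqrt (p a + q a)) (fun a => Real.sqrt (p a + q a))
  have hpos : ∀ a : A, (0:ℝ) < p a + q a := fun a => by
    have := hppos a; have := hqpos a; linarith
  have h1 : ∀ a : A, |p a - q a| / Real.sqrt (p a + q a) * Real.sqrt (p a + q a) = |p a - q a| := by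
    intro a
    rw [div_mul_cancel₀]
    exact Real.sqrt_ne_zero'.2 (hpos a)
  have h2 : ∀ a : A, (|p a - q a| / Real.sqrt (p a + q a))^2 = (p a - q a)^2/(p a + q a) := by
    intro a
    rw [div_pow, sq_abs, Real.sq_sqrt (le_of_lt (hpos a))]
  have h3 : ∀ a : A, (Real.sqrt (p a + q a))^2 = p a + q a := fun a =>
    Real.sq_sqrt (le_of_lt (hpos a))
  simp only [h1, h2, h3] at hcs
  have h4 : ∑ a, (p a + q a) = 2 := by
    rw [Finset.sum_add_distrib, hp.2, hq.2]; norm_num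
  rw [h4] at hcs
  calc (∑ a, |p a - q a|)^2 ≤ (∑ a, (p a - q a)^2/(p a + q a)) * 2 := hcs
  _ = ∑ a, 2*(p a - q a)^2/(p a + q a) := by
      rw [Finset.sum_mul]
      apply Finset.sum_congr rfl
      intro a _; ring

section Gibbs
variable {A : Type*} [Fintype A] [Nonempty A]

noncomputable def gibbsZ (η : ℝ) (π c : A → ℝ) : ℝ := ∑ a, π a * Real.exp (η * c a)

noncomputable def gibbs (η : ℝ) (π c : A → ℝ) (a : A) : ℝ :=
  π a * Real.exp (η * c a) / gibbsZ η π c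

noncomputable def fval (η : ℝ) (π c μ : A → ℝ) : ℝ :=
  (∑ a, μ a * c a) - η⁻¹ * KLdiv μ π

lemma gibbsZ_pos {η : ℝ} {π : A → ℝ} (hπ : ∀ a, 0 < π a) (c : A → ℝ) :
    0 < gibbsZ η π c :=
  Finset.sum_pos (fun a _ => mul_pos (hπ a) (Real.exp_pos _)) Finset.univ_nonempty

lemma gibbs_pos {η : ℝ} {π : A → ℝ} (hπ : ∀ a, 0 < π a) (c : A → ℝ) (a : A) :
    0 < gibbs η π c a :=
  div_pos (mul_pos (hπ a) (Real.exp_pos _)) (gibbsZ_pos hπ c)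

lemma gibbs_simplex {η : ℝ} {π : A → ℝ} (hπ : ∀ a, 0 < π a) (c : A → ℝ) :
    IsSimplex (gibbs η π c) := by
  constructor
  · exact fun a => le_of_lt (gibbs_pos hπ c a)
  · unfold gibbs
    rw [← Finset.sum_div, div_eq_one_iff_eq (ne_of_gt (gibbsZ_pos hπ c))]
    rfl

lemma KL_self {q : A → ℝ} (hq : ∀ a, 0 < q a) : KLdiv q q = 0 := by
  unfold KLdiv
  apply Finset.sum_eq_zero
  intro a _
  rw [div_self (ne_of_gt (hq a)), Real.log_one, mul_zero]

lemma log_gibbs {η : ℝ} {π : A → ℝ} (hπ : ∀ a, 0 < π a) (c : A → ℝ) (a : A) :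
    Real.log (gibbs η π c a) = Real.log (π a) + η * c a - Real.log (gibbsZ η π c) := by
  unfold gibbs
  rw [Real.log_div (ne_of_gt (mul_pos (hπ a) (Real.exp_pos _))) (ne_of_gt (gibbsZ_pos hπ c)),
      Real.log_mul (ne_of_gt (hπ a)) (Real.exp_ne_zero _), Real.log_exp]

/-- Key identity: `fval η π c μ = η⁻¹ log Z - η⁻¹ KL(μ‖gibbs)`. -/
lemma fval_eq {η : ℝ} (hη : 0 < η) {π : A → ℝ} (hπ : ∀ a, 0 < π a) (c : A → ℝ)
    {μ : A → ℝ} (hμ : IsSimplex μ) :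
    fval η π c μ = η⁻¹ * Real.log (gibbsZ η π c) - η⁻¹ * KLdiv μ (gibbs η π c) := by
  have key : KLdiv μ π
      = KLdiv μ (gibbs η π c) + η * (∑ a, μ a * c a) - Real.log (gibbsZ η π c) := by
    unfold KLdiv
    have hpt : ∀ a : A, μ a * Real.log (μ a / π a)
        = μ a * Real.log (μ a / gibbs η π c a) + η * (μ a * c a)
          - Real.log (gibbsZ η π c) * μ a := by
      intro a
      rcases eq_or_lt_of_le (hμ.1 a) with h0 | hpos
      · rw [← h0]; simp
      · rw [Real.log_div (ne_of_gt hpos) (ne_of_gt (hπ a)),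
            Real.log_div (ne_of_gt hpos) (ne_of_gt (gibbs_pos hπ c a)),
            log_gibbs hπ c a]
        ring
    calc ∑ a, μ a * Real.log (μ a / π a)
        = ∑ a, (μ a * Real.log (μ a / gibbs η π c a) + η * (μ a * c a)
            - Real.log (gibbsZ η π c) * μ a) := Finset.sum_congr rfl (fun a _ => hpt a)
      _ = (∑ a, μ a * Real.log (μ a / gibbs η π c a)) + η * (∑ a, μ a * c a)
            - Real.log (gibbsZ η π c) * (∑ a, μ a) := by
          rw [Finset.sum_sub_distrib, Finset.sum_add_distrib, Finset.mul_sum, Finset.mul_sum]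
      _ = _ := by rw [hμ.2]; ring
  unfold fval
  rw [key]
  have : η⁻¹ * η = 1 := inv_mul_cancel₀ (ne_of_gt hη)
  field_simp
  ring
lemma KL_nonneg {μ q : A → ℝ} (hμ : IsSimplex μ) (hq : IsSimplex q)
    (hqpos : ∀ a, 0 < q a) : 0 ≤ KLdiv μ q := by
  have hpt : ∀ a : A, μ a - q a ≤ μ a * Real.log (μ a / q a) := by
    intro a
    rcases eq_or_lt_of_le (hμ.1 a) with h0 | hpos
    · rw [← h0]; simp [le_of_lt (hqpos a)]
    · have h := Real.log_le_sub_one_of_pos (div_pos (hqpos a) hpos)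
      rw [Real.log_div (ne_of_gt (hqpos a)) (ne_of_gt hpos)] at h
      have h2 : Real.log (μ a / q a) = -(Real.log (q a) - Real.log (μ a)) := by
        rw [Real.log_div (ne_of_gt hpos) (ne_of_gt (hqpos a))]; ring
      rw [h2]
      have hh := mul_le_mul_of_nonneg_left h (le_of_lt hpos)
      have hfd : μ a * (q a / μ a - 1) = q a - μ a := by field_simp
      nlinarith
  calc (0:ℝ) = (∑ a, μ a) - ∑ a, q a := by rw [hμ.2, hq.2]; ring
  _ = ∑ a, (μ a - q a) := by rw [Finset.sum_sub_distrib]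
  _ ≤ _ := Finset.sum_le_sum (fun a _ => hpt a)

lemma eq_of_KL_le_zero {μ q : A → ℝ} (hμ : IsSimplex μ) (hq : IsSimplex q)
    (hqpos : ∀ a, 0 < q a) (h : KLdiv μ q ≤ 0) : μ = q := by
  have hpt : ∀ a : A, μ a - q a ≤ μ a * Real.log (μ a / q a) := by
    intro a
    rcases eq_or_lt_of_le (hμ.1 a) with h0 | hpos
    · rw [← h0]; simp [le_of_lt (hqpos a)]
    · have h := Real.log_le_sub_one_of_pos (div_pos (hqpos a) hpos)
      rw [Real.log_div (ne_of_gt (hqpos a)) (ne_of_gt hpos)] at h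
      have h2 : Real.log (μ a / q a) = -(Real.log (q a) - Real.log (μ a)) := by
        rw [Real.log_div (ne_of_gt hpos) (ne_of_gt (hqpos a))]; ring
      rw [h2]
      have hh := mul_le_mul_of_nonneg_left h (le_of_lt hpos)
      have hfd : μ a * (q a / μ a - 1) = q a - μ a := by field_simp
      nlinarith
  -- each term of t a := μ a * log(μ a / q a) - (μ a - q a) is nonneg with sum ≤ 0
  have hsum : ∑ a, (μ a * Real.log (μ a / q a) - (μ a - q a)) = KLdiv μ q := by
    unfold KLdiv
    rw [Finset.sum_sub_distrib, Finset.sum_sub_distrib, hμ.2, hq.2]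
    ring
  have hsum0 : ∑ a, (μ a * Real.log (μ a / q a) - (μ a - q a)) = 0 := by
    have h0 : 0 ≤ ∑ a, (μ a * Real.log (μ a / q a) - (μ a - q a)) :=
      Finset.sum_nonneg (fun a _ => by linarith [hpt a])
    linarith [hsum ▸ h]
  have hterm : ∀ a ∈ Finset.univ, μ a * Real.log (μ a / q a) - (μ a - q a) = 0 := by
    rw [← Finset.sum_eq_zero_iff_of_nonneg (fun a _ => by linarith [hpt a])]
    exact hsum0
  funext a
  have ht := hterm a (Finset.mem_univ a)
  by_contra hne
  rcases eq_or_lt_of_le (hμ.1 a) with h0 | hpos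
  · rw [← h0] at ht
    simp at ht
    exact (ne_of_gt (hqpos a)) ht
  · have hq1 : q a / μ a ≠ 1 := by
      intro hc
      rw [div_eq_one_iff_eq (ne_of_gt hpos)] at hc
      exact hne hc.symm
    have h := Real.log_lt_sub_one_of_pos (div_pos (hqpos a) hpos) hq1
    have h2 : Real.log (μ a / q a) = -(Real.log (q a / μ a)) := by
      rw [Real.log_div (ne_of_gt hpos) (ne_of_gt (hqpos a)),
          Real.log_div (ne_of_gt (hqpos a)) (ne_of_gt hpos)]
      ring
    have hh := mul_lt_mul_of_pos_left h hpos
    have hfd : μ a * (q a / μ a - 1) = q a - μ a := by field_simp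
    rw [h2] at ht
    nlinarith

lemma maximizer_eq_gibbs {η : ℝ} (hη : 0 < η) {π : A → ℝ} (hπ : ∀ a, 0 < π a) (c : A → ℝ)
    {μs : A → ℝ} (hμs : IsSimplex μs)
    (hmax : ∀ μ : A → ℝ, IsSimplex μ → fval η π c μ ≤ fval η π c μs) :
    μs = gibbs η π c := by
  have hg := gibbs_simplex hπ c (η := η)
  have h1 := hmax (gibbs η π c) hg
  rw [fval_eq hη hπ c hg, fval_eq hη hπ c hμs, KL_self (gibbs_pos hπ c)] at h1
  have hKL : KLdiv μs (gibbs η π c) ≤ 0 := by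
    have hinv : 0 < η⁻¹ := by positivity
    nlinarith
  exact eq_of_KL_le_zero hμs hg (gibbs_pos hπ c) hKL

end Gibbs

section Conversion
variable {A₁ A₂ : Type*} [Fintype A₁] [Fintype A₂]

lemma sum_mul_sum_eq (μ : A₁ → ℝ) (ν : A₂ → ℝ) (G : A₁ × A₂ → ℝ) :
    ∑ a₁, μ a₁ * (∑ a₂, ν a₂ * G (a₁, a₂)) = ∑ a₁, ∑ a₂, μ a₁ * ν a₂ * G (a₁, a₂) := by
  refine Finset.sum_congr rfl fun a₁ _ => ?_
  rw [Finset.mul_sum]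
  exact Finset.sum_congr rfl fun a₂ _ => by ring

lemma sum_mul_sum_eq' (μ : A₁ → ℝ) (ν : A₂ → ℝ) (G : A₁ × A₂ → ℝ) :
    ∑ a₂, ν a₂ * (∑ a₁, μ a₁ * G (a₁, a₂)) = ∑ a₁, ∑ a₂, μ a₁ * ν a₂ * G (a₁, a₂) := by
  rw [Finset.sum_comm]
  refine Finset.sum_congr rfl fun a₂ _ => ?_
  rw [Finset.mul_sum]
  exact Finset.sum_congr rfl fun a₁ _ => by ring

lemma J_eq_left (G : A₁ × A₂ → ℝ) (η : ℝ) (π₁ : A₁ → ℝ) (π₂ : A₂ → ℝ)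
    (μ : A₁ → ℝ) (ν : A₂ → ℝ) :
    J G η π₁ π₂ μ ν
      = fval η π₁ (fun a₁ => ∑ a₂, ν a₂ * G (a₁, a₂)) μ + η⁻¹ * KLdiv ν π₂ := by
  simp only [J, fval]
  rw [sum_mul_sum_eq]

lemma J_eq_right (G : A₁ × A₂ → ℝ) (η : ℝ) (π₁ : A₁ → ℝ) (π₂ : A₂ → ℝ)
    (μ : A₁ → ℝ) (ν : A₂ → ℝ) :
    J G η π₁ π₂ μ ν
      = -(fval η π₂ (fun a₂ => -(∑ a₁, μ a₁ * G (a₁, a₂))) ν) - η⁻¹ * KLdiv μ π₁ := by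
  simp only [J, fval]
  have h2 : ∑ a₂, ν a₂ * -(∑ a₁, μ a₁ * G (a₁, a₂))
      = -∑ a₂, ν a₂ * (∑ a₁, μ a₁ * G (a₁, a₂)) := by
    rw [← Finset.sum_neg_distrib]
    exact Finset.sum_congr rfl fun a₂ _ => by ring
  rw [h2, sum_mul_sum_eq']
  ring

lemma bigid (μh μs : A₁ → ℝ) (νh νs : A₂ → ℝ) (Gh Gs : A₁ × A₂ → ℝ) :
    ((∑ a₁, μh a₁ * (∑ a₂, νh a₂ * Gh (a₁, a₂)))
      - (∑ a₁, μs a₁ * (∑ a₂, νh a₂ * Gh (a₁, a₂)))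
      - (∑ a₁, μh a₁ * (∑ a₂, νs a₂ * Gs (a₁, a₂)))
      + (∑ a₁, μs a₁ * (∑ a₂, νs a₂ * Gs (a₁, a₂))))
    + ((∑ a₂, νh a₂ * (∑ a₁, μs a₁ * Gs (a₁, a₂)))
      - (∑ a₂, νs a₂ * (∑ a₁, μs a₁ * Gs (a₁, a₂)))
      - (∑ a₂, νh a₂ * (∑ a₁, μh a₁ * Gh (a₁, a₂)))
      + (∑ a₂, νs a₂ * (∑ a₁, μh a₁ * Gh (a₁, a₂))))
    = (∑ a₁, (μh a₁ - μs a₁) * (∑ a₂, νs a₂ * (Gh (a₁, a₂) - Gs (a₁, a₂))))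
      - (∑ a₂, (νh a₂ - νs a₂) * (∑ a₁, μs a₁ * (Gh (a₁, a₂) - Gs (a₁, a₂)))) := by
  rw [sum_mul_sum_eq μh νh Gh, sum_mul_sum_eq μs νh Gh, sum_mul_sum_eq μh νs Gs,
      sum_mul_sum_eq μs νs Gs, sum_mul_sum_eq' μs νh Gs, sum_mul_sum_eq' μs νs Gs,
      sum_mul_sum_eq' μh νh Gh, sum_mul_sum_eq' μh νs Gh,
      sum_mul_sum_eq (fun a₁ => μh a₁ - μs a₁) νs (fun p => Gh p - Gs p),
      sum_mul_sum_eq' μs (fun a₂ => νh a₂ - νs a₂) (fun p => Gh p - Gs p)]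
  simp only [← Finset.sum_sub_distrib, ← Finset.sum_add_distrib]
  exact Finset.sum_congr rfl fun a₁ _ => Finset.sum_congr rfl fun a₂ _ => by ring

end Conversion

/-- squared ℓ1 stability of regularized saddle points via the
single-player Nash-averaged squared payoff error `ξ²`. -/
theorem stmt9 {A₁ A₂ : Type*} [Fintype A₁] [Fintype A₂] [Nonempty A₁] [Nonempty A₂]
    (Ghat Gstar : A₁ × A₂ → ℝ) (η : ℝ) (hη : 0 < η)
    (π₁ref : A₁ → ℝ) (π₂ref : A₂ → ℝ)
    (h₁ : IsSimplex π₁ref) (h₂ : IsSimplex π₂ref)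
    (h₁pos : ∀ a, 0 < π₁ref a) (h₂pos : ∀ a, 0 < π₂ref a)
    (μhat : A₁ → ℝ) (νhat : A₂ → ℝ) (μs : A₁ → ℝ) (νs : A₂ → ℝ)
    (hhat : IsSaddle Ghat η π₁ref π₂ref μhat νhat)
    (hstar : IsSaddle Gstar η π₁ref π₂ref μs νs) :
    ((∑ a₁, |μhat a₁ - μs a₁|) + (∑ a₂, |νhat a₂ - νs a₂|))^2
      ≤ 4 * η^2 * max
        (Finset.univ.sup' Finset.univ_nonempty
          (fun a₁ => ∑ a₂, νs a₂ * (Ghat (a₁, a₂) - Gstar (a₁, a₂))^2))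
        (Finset.univ.sup' Finset.univ_nonempty
          (fun a₂ => ∑ a₁, μs a₁ * (Ghat (a₁, a₂) - Gstar (a₁, a₂))^2)) := by
  obtain ⟨hμhS, hνhS, hLh, hRh⟩ := hhat
  obtain ⟨hμsS, hνsS, hLs, hRs⟩ := hstar
  -- saddle components are the corresponding Gibbs distributions
  have hmaxμh : ∀ μ : A₁ → ℝ, IsSimplex μ →
      fval η π₁ref (fun a₁ => ∑ a₂, νhat a₂ * Ghat (a₁, a₂)) μ
        ≤ fval η π₁ref (fun a₁ => ∑ a₂, νhat a₂ * Ghat (a₁, a₂)) μhat := by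
    intro μ hμ
    have h := hLh μ hμ
    rw [J_eq_left, J_eq_left] at h
    linarith
  have hmaxμs : ∀ μ : A₁ → ℝ, IsSimplex μ →
      fval η π₁ref (fun a₁ => ∑ a₂, νs a₂ * Gstar (a₁, a₂)) μ
        ≤ fval η π₁ref (fun a₁ => ∑ a₂, νs a₂ * Gstar (a₁, a₂)) μs := by
    intro μ hμ
    have h := hLs μ hμ
    rw [J_eq_left, J_eq_left] at h
    linarith
  have hmaxνh : ∀ ν : A₂ → ℝ, IsSimplex ν →
      fval η π₂ref (fun a₂ => -(∑ a₁, μhat a₁ * Ghat (a₁, a₂))) ν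
        ≤ fval η π₂ref (fun a₂ => -(∑ a₁, μhat a₁ * Ghat (a₁, a₂))) νhat := by
    intro ν hν
    have h := hRh ν hν
    rw [J_eq_right, J_eq_right] at h
    linarith
  have hmaxνs : ∀ ν : A₂ → ℝ, IsSimplex ν →
      fval η π₂ref (fun a₂ => -(∑ a₁, μs a₁ * Gstar (a₁, a₂))) ν
        ≤ fval η π₂ref (fun a₂ => -(∑ a₁, μs a₁ * Gstar (a₁, a₂))) νs := by
    intro ν hν
    have h := hRs ν hν
    rw [J_eq_right, J_eq_right] at h
    linarith
  have hμh_g := maximizer_eq_gibbs hη h₁pos _ hμhS hmaxμh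
  have hμs_g := maximizer_eq_gibbs hη h₁pos _ hμsS hmaxμs
  have hνh_g := maximizer_eq_gibbs hη h₂pos _ hνhS hmaxνh
  have hνs_g := maximizer_eq_gibbs hη h₂pos _ hνsS hmaxνs
  have hμh_pos : ∀ a, 0 < μhat a := fun a => by rw [hμh_g]; exact gibbs_pos h₁pos _ a
  have hμs_pos : ∀ a, 0 < μs a := fun a => by rw [hμs_g]; exact gibbs_pos h₁pos _ a
  have hνh_pos : ∀ a, 0 < νhat a := fun a => by rw [hνh_g]; exact gibbs_pos h₂pos _ a
  have hνs_pos : ∀ a, 0 < νs a := fun a => by rw [hνs_g]; exact gibbs_pos h₂pos _ a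
  -- the four three-point equalities
  have E1 : fval η π₁ref (fun a₁ => ∑ a₂, νs a₂ * Gstar (a₁, a₂)) μs
      - fval η π₁ref (fun a₁ => ∑ a₂, νs a₂ * Gstar (a₁, a₂)) μhat
      = η⁻¹ * KLdiv μhat μs := by
    rw [fval_eq hη h₁pos _ hμsS, fval_eq hη h₁pos _ hμhS, ← hμs_g, KL_self hμs_pos]
    ring
  have E2 : fval η π₁ref (fun a₁ => ∑ a₂, νhat a₂ * Ghat (a₁, a₂)) μhat
      - fval η π₁ref (fun a₁ => ∑ a₂, νhat a₂ * Ghat (a₁, a₂)) μs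
      = η⁻¹ * KLdiv μs μhat := by
    rw [fval_eq hη h₁pos _ hμsS, fval_eq hη h₁pos _ hμhS, ← hμh_g, KL_self hμh_pos]
    ring
  have E3 : fval η π₂ref (fun a₂ => -(∑ a₁, μs a₁ * Gstar (a₁, a₂))) νs
      - fval η π₂ref (fun a₂ => -(∑ a₁, μs a₁ * Gstar (a₁, a₂))) νhat
      = η⁻¹ * KLdiv νhat νs := by
    rw [fval_eq hη h₂pos _ hνsS, fval_eq hη h₂pos _ hνhS, ← hνs_g, KL_self hνs_pos]
    ring
  have E4 : fval η π₂ref (fun a₂ => -(∑ a₁, μhat a₁ * Ghat (a₁, a₂))) νhat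
      - fval η π₂ref (fun a₂ => -(∑ a₁, μhat a₁ * Ghat (a₁, a₂))) νs
      = η⁻¹ * KLdiv νs νhat := by
    rw [fval_eq hη h₂pos _ hνsS, fval_eq hη h₂pos _ hνhS, ← hνh_g, KL_self hνh_pos]
    ring
  simp only [fval, mul_neg, Finset.sum_neg_distrib] at E1 E2 E3 E4
  -- the combined identity
  have hS : η⁻¹ * (KLdiv μhat μs + KLdiv μs μhat + KLdiv νhat νs + KLdiv νs νhat)
      = (∑ a₁, (μhat a₁ - μs a₁) * (∑ a₂, νs a₂ * (Ghat (a₁, a₂) - Gstar (a₁, a₂))))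
        - (∑ a₂, (νhat a₂ - νs a₂) * (∑ a₁, μs a₁ * (Ghat (a₁, a₂) - Gstar (a₁, a₂)))) := by
    rw [← bigid μhat μs νhat νs Ghat Gstar]
    linarith
  set a : ℝ := ∑ a₁, |μhat a₁ - μs a₁| with hadef
  set b : ℝ := ∑ a₂, |νhat a₂ - νs a₂| with hbdef
  set X : ℝ := max
      (Finset.univ.sup' Finset.univ_nonempty
        (fun a₁ => ∑ a₂, νs a₂ * (Ghat (a₁, a₂) - Gstar (a₁, a₂))^2))
      (Finset.univ.sup' Finset.univ_nonempty
        (fun a₂ => ∑ a₁, μs a₁ * (Ghat (a₁, a₂) - Gstar (a₁, a₂))^2)) with hXdef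
  have hX0 : 0 ≤ X := by
    obtain ⟨a₁⟩ := (inferInstance : Nonempty A₁)
    refine le_trans ?_ (le_trans (Finset.le_sup'
      (fun a₁ => ∑ a₂, νs a₂ * (Ghat (a₁, a₂) - Gstar (a₁, a₂))^2) (Finset.mem_univ a₁))
      (le_max_left _ _))
    exact Finset.sum_nonneg fun a₂ _ => mul_nonneg (hνsS.1 a₂) (sq_nonneg _)
  -- pointwise weighted Cauchy-Schwarz bounds
  have hw1 : ∀ a₁ : A₁, |∑ a₂, νs a₂ * (Ghat (a₁, a₂) - Gstar (a₁, a₂))| ≤ Real.sqrt X := by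
    intro a₁
    have hcs := Finset.sum_mul_sq_le_sq_mul_sq Finset.univ
      (fun a₂ => Real.sqrt (νs a₂))
      (fun a₂ => Real.sqrt (νs a₂) * (Ghat (a₁, a₂) - Gstar (a₁, a₂)))
    have t1 : ∑ a₂, Real.sqrt (νs a₂) * (Real.sqrt (νs a₂) * (Ghat (a₁, a₂) - Gstar (a₁, a₂)))
        = ∑ a₂, νs a₂ * (Ghat (a₁, a₂) - Gstar (a₁, a₂)) :=
      Finset.sum_congr rfl fun a₂ _ => by
        rw [← mul_assoc, Real.mul_self_sqrt (hνsS.1 a₂)]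
    have t2 : ∑ a₂, (Real.sqrt (νs a₂))^2 = 1 := by
      rw [show (∑ a₂, (Real.sqrt (νs a₂))^2) = ∑ a₂, νs a₂ from
        Finset.sum_congr rfl fun a₂ _ => Real.sq_sqrt (hνsS.1 a₂), hνsS.2]
    have t3 : ∑ a₂, (Real.sqrt (νs a₂) * (Ghat (a₁, a₂) - Gstar (a₁, a₂)))^2
        = ∑ a₂, νs a₂ * (Ghat (a₁, a₂) - Gstar (a₁, a₂))^2 :=
      Finset.sum_congr rfl fun a₂ _ => by
        rw [mul_pow, Real.sq_sqrt (hνsS.1 a₂)]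
    rw [t1, t2, t3, one_mul] at hcs
    have h4 : ∑ a₂, νs a₂ * (Ghat (a₁, a₂) - Gstar (a₁, a₂))^2 ≤ X :=
      le_trans (Finset.le_sup'
        (fun a₁ => ∑ a₂, νs a₂ * (Ghat (a₁, a₂) - Gstar (a₁, a₂))^2) (Finset.mem_univ a₁))
        (le_max_left _ _)
    calc |∑ a₂, νs a₂ * (Ghat (a₁, a₂) - Gstar (a₁, a₂))|
        = Real.sqrt ((∑ a₂, νs a₂ * (Ghat (a₁, a₂) - Gstar (a₁, a₂)))^2) :=
          (Real.sqrt_sq_eq_abs _).symm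
      _ ≤ Real.sqrt X := Real.sqrt_le_sqrt (by linarith)
  have hw2 : ∀ a₂ : A₂, |∑ a₁, μs a₁ * (Ghat (a₁, a₂) - Gstar (a₁, a₂))| ≤ Real.sqrt X := by
    intro a₂
    have hcs := Finset.sum_mul_sq_le_sq_mul_sq Finset.univ
      (fun a₁ => Real.sqrt (μs a₁))
      (fun a₁ => Real.sqrt (μs a₁) * (Ghat (a₁, a₂) - Gstar (a₁, a₂)))
    have t1 : ∑ a₁, Real.sqrt (μs a₁) * (Real.sqrt (μs a₁) * (Ghat (a₁, a₂) - Gstar (a₁, a₂)))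
        = ∑ a₁, μs a₁ * (Ghat (a₁, a₂) - Gstar (a₁, a₂)) :=
      Finset.sum_congr rfl fun a₁ _ => by
        rw [← mul_assoc, Real.mul_self_sqrt (hμsS.1 a₁)]
    have t2 : ∑ a₁, (Real.sqrt (μs a₁))^2 = 1 := by
      rw [show (∑ a₁, (Real.sqrt (μs a₁))^2) = ∑ a₁, μs a₁ from
        Finset.sum_congr rfl fun a₁ _ => Real.sq_sqrt (hμsS.1 a₁), hμsS.2]
    have t3 : ∑ a₁, (Real.sqrt (μs a₁) * (Ghat (a₁, a₂) - Gstar (a₁, a₂)))^2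
        = ∑ a₁, μs a₁ * (Ghat (a₁, a₂) - Gstar (a₁, a₂))^2 :=
      Finset.sum_congr rfl fun a₁ _ => by
        rw [mul_pow, Real.sq_sqrt (hμsS.1 a₁)]
    rw [t1, t2, t3, one_mul] at hcs
    have h4 : ∑ a₁, μs a₁ * (Ghat (a₁, a₂) - Gstar (a₁, a₂))^2 ≤ X :=
      le_trans (Finset.le_sup'
        (fun a₂ => ∑ a₁, μs a₁ * (Ghat (a₁, a₂) - Gstar (a₁, a₂))^2) (Finset.mem_univ a₂))
        (le_max_right _ _)
    calc |∑ a₁, μs a₁ * (Ghat (a₁, a₂) - Gstar (a₁, a₂))|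
        = Real.sqrt ((∑ a₁, μs a₁ * (Ghat (a₁, a₂) - Gstar (a₁, a₂)))^2) :=
          (Real.sqrt_sq_eq_abs _).symm
      _ ≤ Real.sqrt X := Real.sqrt_le_sqrt (by linarith)
  -- bound the two bilinear error terms
  have hP : |∑ a₁, (μhat a₁ - μs a₁) * (∑ a₂, νs a₂ * (Ghat (a₁, a₂) - Gstar (a₁, a₂)))|
      ≤ a * Real.sqrt X := by
    calc |∑ a₁, (μhat a₁ - μs a₁) * (∑ a₂, νs a₂ * (Ghat (a₁, a₂) - Gstar (a₁, a₂)))|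
        ≤ ∑ a₁, |(μhat a₁ - μs a₁) * (∑ a₂, νs a₂ * (Ghat (a₁, a₂) - Gstar (a₁, a₂)))| :=
          Finset.abs_sum_le_sum_abs _ _
      _ = ∑ a₁, |μhat a₁ - μs a₁| * |∑ a₂, νs a₂ * (Ghat (a₁, a₂) - Gstar (a₁, a₂))| :=
          Finset.sum_congr rfl fun a₁ _ => abs_mul _ _
      _ ≤ ∑ a₁, |μhat a₁ - μs a₁| * Real.sqrt X :=
          Finset.sum_le_sum fun a₁ _ =>
            mul_le_mul_of_nonneg_left (hw1 a₁) (abs_nonneg _)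
      _ = a * Real.sqrt X := by rw [hadef, Finset.sum_mul]
  have hQ : |∑ a₂, (νhat a₂ - νs a₂) * (∑ a₁, μs a₁ * (Ghat (a₁, a₂) - Gstar (a₁, a₂)))|
      ≤ b * Real.sqrt X := by
    calc |∑ a₂, (νhat a₂ - νs a₂) * (∑ a₁, μs a₁ * (Ghat (a₁, a₂) - Gstar (a₁, a₂)))|
        ≤ ∑ a₂, |(νhat a₂ - νs a₂) * (∑ a₁, μs a₁ * (Ghat (a₁, a₂) - Gstar (a₁, a₂)))| :=
          Finset.abs_sum_le_sum_abs _ _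
      _ = ∑ a₂, |νhat a₂ - νs a₂| * |∑ a₁, μs a₁ * (Ghat (a₁, a₂) - Gstar (a₁, a₂))| :=
          Finset.sum_congr rfl fun a₂ _ => abs_mul _ _
      _ ≤ ∑ a₂, |νhat a₂ - νs a₂| * Real.sqrt X :=
          Finset.sum_le_sum fun a₂ _ =>
            mul_le_mul_of_nonneg_left (hw2 a₂) (abs_nonneg _)
      _ = b * Real.sqrt X := by rw [hbdef, Finset.sum_mul]
  -- lower bounds from symmetric KL
  have hla : a^2 ≤ KLdiv μhat μs + KLdiv μs μhat := symKL_ge hμhS hμsS hμh_pos hμs_pos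
  have hlb : b^2 ≤ KLdiv νhat νs + KLdiv νs νhat := symKL_ge hνhS hνsS hνh_pos hνs_pos
  -- combine
  have hmain : a^2 + b^2 ≤ η * ((a + b) * Real.sqrt X) := by
    have hSle : KLdiv μhat μs + KLdiv μs μhat + KLdiv νhat νs + KLdiv νs νhat
        ≤ η * ((a + b) * Real.sqrt X) := by
      have h5 : (∑ a₁, (μhat a₁ - μs a₁) * (∑ a₂, νs a₂ * (Ghat (a₁, a₂) - Gstar (a₁, a₂))))
          - (∑ a₂, (νhat a₂ - νs a₂) * (∑ a₁, μs a₁ * (Ghat (a₁, a₂) - Gstar (a₁, a₂))))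
          ≤ (a + b) * Real.sqrt X := by
        have := le_abs_self (∑ a₁, (μhat a₁ - μs a₁)
          * (∑ a₂, νs a₂ * (Ghat (a₁, a₂) - Gstar (a₁, a₂))))
        have := neg_abs_le (∑ a₂, (νhat a₂ - νs a₂)
          * (∑ a₁, μs a₁ * (Ghat (a₁, a₂) - Gstar (a₁, a₂))))
        nlinarith [hP, hQ]
      have h6 := mul_le_mul_of_nonneg_left h5 (le_of_lt hη)
      have h7 : η * (η⁻¹ * (KLdiv μhat μs + KLdiv μs μhat + KLdiv νhat νs + KLdiv νs νhat))
          = KLdiv μhat μs + KLdiv μs μhat + KLdiv νhat νs + KLdiv νs νhat := by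
        rw [← mul_assoc, mul_inv_cancel₀ (ne_of_gt hη), one_mul]
      rw [hS] at h7
      linarith
    linarith
  have ha0 : 0 ≤ a := Finset.sum_nonneg fun a₁ _ => abs_nonneg _
  have hb0 : 0 ≤ b := Finset.sum_nonneg fun a₂ _ => abs_nonneg _
  clear_value a b X
  clear hadef hbdef hXdef E1 E2 E3 E4 hS hP hQ hw1 hw2 hmaxμh hmaxμs hmaxνh hmaxνs
  clear hμh_g hμs_g hνh_g hνs_g hla hlb hLh hRh hLs hRs hμh_pos hμs_pos hνh_pos hνs_pos
  clear hμhS hνhS hμsS hνsS h₁ h₂ h₁pos h₂pos Ghat Gstar π₁ref π₂ref μhat νhat μs νs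
  have hab : 0 ≤ a + b := by linarith
  rcases eq_or_lt_of_le hab with h0 | hpos
  · rw [← h0]
    nlinarith [hX0, sq_nonneg η]
  · have h12 : (a + b)^2 ≤ 2*(a^2 + b^2) := by nlinarith [sq_nonneg (a - b)]
    have h8 : (a + b)^2 ≤ (2 * η * Real.sqrt X) * (a + b) := by
      have h13 : (2 * η * Real.sqrt X) * (a + b) = 2*(η * ((a + b) * Real.sqrt X)) := by ring
      linarith
    have h9 : a + b ≤ 2 * η * Real.sqrt X := by
      by_contra hc
      push_neg at hc
      nlinarith
    have hrt : 0 ≤ Real.sqrt X := Real.sqrt_nonneg X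
    have h10 : (a + b)^2 ≤ (2 * η * Real.sqrt X)^2 := by nlinarith [h9, hab, hrt]
    have h11 : (2 * η * Real.sqrt X)^2 = 4 * η^2 * X := by
      rw [mul_pow, mul_pow, Real.sq_sqrt hX0]
      ring
    rw [h11] at h10
    exact h10
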